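/- Let s, t > 1 be odd integers with gcd(s, t) = 1, and let k, k' : ZMod s and ℓ, ℓ' : ZMod t. Then the graph D_{k,ℓ} ⊔ D_{k',ℓ'} on ZMod s × ZMod t contains a Hamiltonian path if and only if k − k' is a unit of ZMod s and ℓ − ℓ' is a unit of ZMod t. -/

import Mathlib

/-- For `s, t ≥ 1`, `k : ZMod s`, `ℓ : ZMod t`, the graph `D k ℓ` on vertex set
`ZMod s × ZMod t` in which distinct vertices `(i, j)` and `(i', j')` are
adjacent iff `i + i' = k` and `j + j' = ℓ`. -/
def D (s t : ℕ) (k : ZMod s) (ℓ : ZMod t) : SimpleGraph (ZMod s × ZMod t) where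
  Adj x y := x ≠ y ∧ x.1 + y.1 = k ∧ x.2 + y.2 = ℓ
  symm := ⟨fun x y ⟨h1, h2, h3⟩ =>
    ⟨h1.symm, by rwa [add_comm], by rwa [add_comm]⟩⟩
  loopless := ⟨fun x ⟨h, _⟩ => h rfl⟩

/-- A graph has a Hamiltonian path if some walk in it is a Hamiltonian path. -/
def HasHamiltonianPath {V : Type*} [DecidableEq V] (G : SimpleGraph V) : Prop :=
  ∃ (a b : V) (p : G.Walk a b), p.IsHamiltonian

section Walks

variable {V : Type*} {G : SimpleGraph V}

/-- Build a walk from a sequence of consecutively adjacent vertices. -/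
def mkWalk (f : ℕ → V) : ∀ n : ℕ, (∀ i < n, G.Adj (f i) (f (i + 1))) → G.Walk (f 0) (f n)
  | 0, _ => SimpleGraph.Walk.nil
  | n + 1, h =>
      (mkWalk f n fun i hi => h i (Nat.lt_succ_of_lt hi)).concat (h n (Nat.lt_succ_self n))

theorem mkWalk_support (f : ℕ → V) (n : ℕ) (h : ∀ i < n, G.Adj (f i) (f (i + 1))) :
    (mkWalk f n h).support = (List.range (n + 1)).map f := by
  induction n with
  | zero => simp [mkWalk, List.range_succ]
  | succ n ih =>
      rw [mkWalk, SimpleGraph.Walk.support_concat, ih, List.range_succ (n := n + 1)]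
      simp

theorem walk_prop (P : V → Prop) (hP : ∀ x y, G.Adj x y → P x → P y) :
    ∀ {x y : V} (w : G.Walk x y), P x → ∀ v ∈ w.support, P v := by
  intro x y w
  induction w with
  | nil =>
      intro hx v hv
      rw [SimpleGraph.Walk.support_nil, List.mem_singleton] at hv
      exact hv ▸ hx
  | cons h q ih =>
      intro hx v hv
      rw [SimpleGraph.Walk.support_cons] at hv
      rcases List.mem_cons.mp hv with rfl | hv
      · exact hx
      · exact ih (hP _ _ h hx) v hv

end Walks

section Core

variable {V : Type*} [AddCommGroup V] [Fintype V] [DecidableEq V]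

/-- Backward core: if the "order" hypothesis holds, construct a Hamiltonian path. -/
theorem exists_hamiltonian (G : SimpleGraph V) (c c' : V)
    (hadj : ∀ x y : V, x ≠ y → x + y = c ∨ x + y = c' → G.Adj x y)
    (hodd : Odd (Fintype.card V)) (hN1 : 1 < Fintype.card V)
    (hord : ∀ n : ℕ, n • (c - c') = 0 → Fintype.card V ∣ n) :
    HasHamiltonianPath G := by
  set N := Fintype.card V with hNdef
  set d := c - c' with hd
  obtain ⟨m0, hm0⟩ := hodd
  set u := m0 + 1 with hu0
  have hu : N + 1 = 2 * u := by omega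
  set a := u • c with ha
  have hca : a + a = c := by
    rw [ha, ← add_nsmul, ← two_mul, ← hu, add_nsmul, one_nsmul, hNdef,
      card_nsmul_eq_zero, zero_add]
  set f : ℕ → V := fun n => if Even n then a + (n / 2) • d else (c' - a) - (n / 2) • d
    with hf
  have hfe : ∀ m : ℕ, f (m + m) = a + m • d := by
    intro m
    rw [hf]
    simp only
    rw [if_pos ⟨m, rfl⟩, show (m + m) / 2 = m by omega]
  have hfo : ∀ m : ℕ, f (m + m + 1) = (c' - a) - m • d := by
    intro m
    rw [hf]
    simp only
    rw [if_neg (by simp [Nat.even_add_one, ← two_mul]), show (m + m + 1) / 2 = m by omega]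
  have hcanc : ∀ p q : ℕ, p ≤ q → p • d = q • d → N ∣ q - p := by
    intro p q hpq h
    apply hord
    rw [sub_nsmul d hpq, ← h]
    exact add_neg_cancel _
  have hmix : ∀ p q : ℕ, a + p • d = (c' - a) - q • d → N ∣ p + q + 1 := by
    intro p q h
    apply hord
    have h2 : (a + p • d) + (a + q • d) = c' := by rw [h]; abel
    calc (p + q + 1) • d = (a + p • d) + (a + q • d) + d - (a + a) := by
          rw [add_nsmul, add_nsmul, one_nsmul]; abel
      _ = c' + (c - c') - c := by rw [h2, hca, hd]
      _ = 0 := by abel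
  have hinj : ∀ m < N, ∀ n < N, f m = f n → m = n := by
    intro m hm n hn h
    rcases Nat.even_or_odd m with ⟨p, hp⟩ | ⟨p, hp⟩ <;>
      rcases Nat.even_or_odd n with ⟨q, hq⟩ | ⟨q, hq⟩ <;> subst hp <;> subst hq
    · -- even, even
      rw [hfe, hfe] at h
      have h' := add_left_cancel h
      rcases le_total p q with hle | hle
      · have := Nat.eq_zero_of_dvd_of_lt (hcanc p q hle h') (by omega)
        omega
      · have := Nat.eq_zero_of_dvd_of_lt (hcanc q p hle h'.symm) (by omega)
        omega
    · -- even, odd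
      rw [hfe, show 2 * q + 1 = q + q + 1 by ring, hfo] at h
      have := Nat.eq_zero_of_dvd_of_lt (hmix p q h) (by omega)
      omega
    · -- odd, even
      rw [hfe, show 2 * p + 1 = p + p + 1 by ring, hfo] at h
      have := Nat.eq_zero_of_dvd_of_lt (hmix q p h.symm) (by omega)
      omega
    · -- odd, odd
      rw [show 2 * p + 1 = p + p + 1 by ring, show 2 * q + 1 = q + q + 1 by ring,
        hfo, hfo] at h
      have h' : p • d = q • d := by
        have := sub_right_inj.mp h
        exact this
      rcases le_total p q with hle | hle
      · have := Nat.eq_zero_of_dvd_of_lt (hcanc p q hle h') (by omega)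
        omega
      · have := Nat.eq_zero_of_dvd_of_lt (hcanc q p hle h'.symm) (by omega)
        omega
  have hadj2 : ∀ i, i + 1 < N → G.Adj (f i) (f (i + 1)) := by
    intro i hi
    have hne : f i ≠ f (i + 1) := by
      intro h
      have := hinj i (by omega) (i + 1) hi h
      omega
    apply hadj _ _ hne
    rcases Nat.even_or_odd i with ⟨m, hm⟩ | ⟨m, hm⟩
    · right
      subst hm
      rw [hfe, hfo]
      abel
    · left
      rw [hm, show 2 * m + 1 = m + m + 1 by ring, hfo,
        show m + m + 1 + 1 = (m + 1) + (m + 1) by ring, hfe, succ_nsmul, hd]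
      abel
  have hsurj : ∀ v : V, ∃ i < N, f i = v := by
    have hbij : Function.Bijective (fun i : Fin N => f i) := by
      rw [Fintype.bijective_iff_injective_and_card]
      exact ⟨fun i j hij => Fin.ext (hinj i i.2 j j.2 hij), (Fintype.card_fin N).trans hNdef⟩
    intro v
    obtain ⟨i, hi⟩ := hbij.2 v
    exact ⟨i, i.2, hi⟩
  have hadj' : ∀ i < N - 1, G.Adj (f i) (f (i + 1)) := fun i hi => hadj2 i (by omega)
  refine ⟨f 0, f (N - 1), mkWalk f (N - 1) hadj', ?_⟩
  intro v
  rw [mkWalk_support]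
  have hN1' : N - 1 + 1 = N := by omega
  have hmem : v ∈ (List.range (N - 1 + 1)).map f := by
    obtain ⟨i, hiN, rfl⟩ := hsurj v
    exact List.mem_map_of_mem (f := f) (List.mem_range.mpr (by omega))
  have hnodup : ((List.range (N - 1 + 1)).map f).Nodup := by
    refine List.Nodup.map_on ?_ List.nodup_range
    intro x hx y hy hxy
    exact hinj x (by have := List.mem_range.mp hx; omega)
      y (by have := List.mem_range.mp hy; omega) hxy
  exact List.count_eq_one_of_mem hnodup hmem

/-- Forward core: a Hamiltonian path forces the difference to generate everything. -/
theorem forward_core (G : SimpleGraph V) (c c' : V)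
    (hadj : ∀ x y : V, G.Adj x y → x + y = c ∨ x + y = c')
    (hodd : Odd (Fintype.card V))
    (hham : HasHamiltonianPath G) :
    ∀ v : V, v ∈ AddSubgroup.zmultiples (c - c') := by
  obtain ⟨x0, y0, p, hp⟩ := hham
  set H := AddSubgroup.zmultiples (c - c') with hH
  have hdH : c - c' ∈ H := AddSubgroup.mem_zmultiples _
  set P : V → Prop := fun v => v - x0 ∈ H ∨ v + x0 - c ∈ H with hPdef
  have hstep : ∀ x y : V, G.Adj x y → P x → P y := by
    intro x y hxy hx
    rcases hadj x y hxy with hsum | hsum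
    · rcases hx with h | h
      · right
        have : y + x0 - c = -(x - x0) := by rw [← hsum]; abel
        rw [this]
        exact neg_mem h
      · left
        have : y - x0 = -(x + x0 - c) := by rw [← hsum]; abel
        rw [this]
        exact neg_mem h
    · rcases hx with h | h
      · right
        have : y + x0 - c = -(x - x0) - (c - c') := by rw [← hsum]; abel
        rw [this]
        exact sub_mem (neg_mem h) hdH
      · left
        have : y - x0 = -(x + x0 - c) - (c - c') := by rw [← hsum]; abel
        rw [this]
        exact sub_mem (neg_mem h) hdH
  have hallP : ∀ v : V, P v := by
    intro v
    have hmem : v ∈ p.support := by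
      have := hp v
      exact List.count_pos_iff.mp (by omega)
    exact walk_prop P hstep p (Or.inl (by rw [sub_self]; exact zero_mem H)) v hmem
  have hsub : (Set.univ : Set V) ⊆
      ((x0 + ·) '' (H : Set V)) ∪ (((c - x0) + ·) '' (H : Set V)) := by
    intro v _
    rcases hallP v with h | h
    · left
      exact ⟨v - x0, h, by show x0 + (v - x0) = v; abel⟩
    · right
      exact ⟨v + x0 - c, h, by show c - x0 + (v + x0 - c) = v; abel⟩
  have hNV : Nat.card V = Fintype.card V := Nat.card_eq_fintype_card
  have hcard : Fintype.card V ≤ 2 * Nat.card H := by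
    calc Fintype.card V = (Set.univ : Set V).ncard := by rw [Set.ncard_univ, hNV]
      _ ≤ (((x0 + ·) '' (H : Set V)) ∪ (((c - x0) + ·) '' (H : Set V))).ncard :=
          Set.ncard_le_ncard hsub (Set.toFinite _)
      _ ≤ ((x0 + ·) '' (H : Set V)).ncard + (((c - x0) + ·) '' (H : Set V)).ncard :=
          Set.ncard_union_le _ _
      _ = 2 * Nat.card H := by
          have hHn : (H : Set V).ncard = Nat.card H := (Nat.card_coe_set_eq _).symm
          rw [Set.ncard_image_of_injective _ (add_right_injective x0),
            Set.ncard_image_of_injective _ (add_right_injective (c - x0)), hHn]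
          ring
  have hdvd : Nat.card H ∣ Fintype.card V := by
    rw [← hNV]
    exact AddSubgroup.card_addSubgroup_dvd_card H
  have hpos : 0 < Nat.card H := Nat.card_pos
  obtain ⟨q, hq⟩ := hdvd
  have hq2 : q ≤ 2 := by
    by_contra h'
    push_neg at h'
    have : 2 * Nat.card H < Nat.card H * q := by
      calc 2 * Nat.card H < 3 * Nat.card H := by omega
        _ ≤ q * Nat.card H := Nat.mul_le_mul_right _ (by omega)
        _ = Nat.card H * q := Nat.mul_comm _ _
    omega
  obtain ⟨m0, hm0⟩ := hodd
  have hcardH : Nat.card H = Fintype.card V := by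
    interval_cases q <;> omega
  have htop : H = ⊤ := AddSubgroup.eq_top_of_card_eq H (by rw [hcardH, hNV])
  intro v
  rw [htop]
  trivial

end Core

theorem stmt_11 (s t : ℕ) (hs : 1 < s) (ht : 1 < t)
    (hsodd : Odd s) (htodd : Odd t) (hco : Nat.Coprime s t)
    (k k' : ZMod s) (ℓ ℓ' : ZMod t) :
    HasHamiltonianPath (D s t k ℓ ⊔ D s t k' ℓ') ↔
      IsUnit (k - k') ∧ IsUnit (ℓ - ℓ') := by
  haveI : NeZero s := ⟨by omega⟩
  haveI : NeZero t := ⟨by omega⟩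
  have hcardV : Fintype.card (ZMod s × ZMod t) = s * t := by
    rw [Fintype.card_prod, ZMod.card, ZMod.card]
  have hodd : Odd (Fintype.card (ZMod s × ZMod t)) := by
    rw [hcardV]; exact hsodd.mul htodd
  have hfst : ∀ (n : ℤ) (x : ZMod s × ZMod t), (n • x).1 = n • x.1 := fun _ _ => rfl
  have hsnd : ∀ (n : ℤ) (x : ZMod s × ZMod t), (n • x).2 = n • x.2 := fun _ _ => rfl
  constructor
  · intro hham
    have hadj : ∀ x y : ZMod s × ZMod t, (D s t k ℓ ⊔ D s t k' ℓ').Adj x y →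
        x + y = (k, ℓ) ∨ x + y = (k', ℓ') := by
      intro x y hxy
      rcases (hxy : (_ ∧ _ ∧ _) ∨ (_ ∧ _ ∧ _)) with ⟨-, h1, h2⟩ | ⟨-, h1, h2⟩
      · left; exact Prod.ext h1 h2
      · right; exact Prod.ext h1 h2
    have hgen := forward_core _ _ _ hadj hodd hham
    constructor
    · obtain ⟨n, hn⟩ := AddSubgroup.mem_zmultiples_iff.mp (hgen (1, 0))
      have h1 : (n : ZMod s) * (k - k') = 1 := by
        have := congrArg Prod.fst hn
        rw [hfst] at this
        rw [← zsmul_eq_mul]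
        exact this.trans (by norm_num)
      exact IsUnit.of_mul_eq_one _ ((mul_comm _ _).trans h1)
    · obtain ⟨n, hn⟩ := AddSubgroup.mem_zmultiples_iff.mp (hgen (0, 1))
      have h1 : (n : ZMod t) * (ℓ - ℓ') = 1 := by
        have := congrArg Prod.snd hn
        rw [hsnd] at this
        rw [← zsmul_eq_mul]
        exact this.trans (by norm_num)
      exact IsUnit.of_mul_eq_one _ ((mul_comm _ _).trans h1)
  · rintro ⟨hk, hl⟩
    apply exists_hamiltonian _ ((k, ℓ) : ZMod s × ZMod t) ((k', ℓ') : ZMod s × ZMod t)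
    · intro x y hne hsum
      rcases hsum with h | h
      · exact Or.inl (show _ ∧ _ ∧ _ from ⟨hne, congrArg Prod.fst h, congrArg Prod.snd h⟩)
      · exact Or.inr (show _ ∧ _ ∧ _ from ⟨hne, congrArg Prod.fst h, congrArg Prod.snd h⟩)
    · exact hodd
    · rw [hcardV]; nlinarith
    · intro n hn
      rw [hcardV]
      have h1 : (n : ZMod s) * (k - k') = 0 := by
        have := congrArg Prod.fst hn
        have h' : (n : ℕ) • (k - k') = (0 : ZMod s) := this
        rwa [nsmul_eq_mul] at h'
      have h2 : (n : ZMod t) * (ℓ - ℓ') = 0 := by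
        have := congrArg Prod.snd hn
        have h' : (n : ℕ) • (ℓ - ℓ') = (0 : ZMod t) := this
        rwa [nsmul_eq_mul] at h'
      have hds : s ∣ n := by
        rw [← ZMod.natCast_eq_zero_iff]
        exact (IsUnit.mul_left_eq_zero hk).mp h1
      have hdt : t ∣ n := by
        rw [← ZMod.natCast_eq_zero_iff]
        exact (IsUnit.mul_left_eq_zero hl).mp h2
      exact Nat.Coprime.mul_dvd_of_dvd_of_dvd hco hds hdt
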